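/- Let D' be the finite-dimensional algebra generated by x, g, u_0, …, u_{m-1} subject to x^{md} = g^m = 1, u_j u_0 = 0 for 1 ≤ j ≤ m-1, u_i = γ^i x^d u_i, x u_i = u_i x^{-1}, u_i g = γ^i x^{-2d} g u_i, and u_0^2 = (1/m) x^{-(1+m)d/2} φ_0 ⋯ φ_{m-2} g, where φ_i = 1 - γ^{-i-1} x^d. Then the element Λ := ∑_{i=0}^{md-1} ∑_{j=0}^{m-1} x^i g^j + ∑_{i=0}^{md-1} ∑_{j=0}^{m-1} x^i g^j u_0 satisfies h Λ = ε(h) Λ for all generators h ∈ {x, g, u_0, …, u_{m-1}}, where ε(x) = ε(g) = ε(u_0) = 1 and ε(u_s) = 0 for 1 ≤ s ≤ m-1; moreover ε(Λ) = 2 m² d ≠ 0. -/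

import Mathlib

lemma aux_shift {A : Type*} [Ring A] {x : A} {n : ℕ} (h : x ^ n = 1) :
    ∑ i ∈ Finset.range n, x ^ (i + 1) = ∑ i ∈ Finset.range n, x ^ i := by
  have h1 := Finset.sum_range_succ' (fun i => x ^ i) n
  rw [Finset.sum_range_succ (fun i => x ^ i) n, h, pow_zero] at h1
  exact (add_right_cancel h1).symm

lemma aux_mull {A : Type*} [Ring A] {x : A} {n : ℕ} (h : x ^ n = 1) :
    x * ∑ i ∈ Finset.range n, x ^ i = ∑ i ∈ Finset.range n, x ^ i := by
  rw [Finset.mul_sum]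
  simp_rw [← pow_succ']
  exact aux_shift h

lemma aux_mulr {A : Type*} [Ring A] {x : A} {n : ℕ} (h : x ^ n = 1) :
    (∑ i ∈ Finset.range n, x ^ i) * x = ∑ i ∈ Finset.range n, x ^ i := by
  rw [Finset.sum_mul]
  simp_rw [← pow_succ]
  exact aux_shift h

lemma aux_inv_sum {A : Type*} [Ring A] {x xi : A} (hxy : x * xi = 1) (hyx : xi * x = 1)
    {n : ℕ} (hx : x ^ n = 1) :
    ∑ i ∈ Finset.range n, xi ^ i = ∑ i ∈ Finset.range n, x ^ i := by
  have hc : Commute xi x := by unfold Commute SemiconjBy; rw [hyx, hxy]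
  have hpow : ∀ a : ℕ, xi ^ a * x ^ a = 1 := fun a => by rw [← hc.mul_pow, hyx, one_pow]
  have hinv : ∀ a b : ℕ, a + b = n → xi ^ a = x ^ b := by
    intro a b hab
    calc xi ^ a = xi ^ a * (x ^ a * x ^ b) := by rw [← pow_add, hab, hx, mul_one]
    _ = xi ^ a * x ^ a * x ^ b := by rw [mul_assoc]
    _ = x ^ b := by rw [hpow, one_mul]
  cases n with
  | zero => rfl
  | succ N =>
    rw [Finset.sum_range_succ' (fun i => xi ^ i), Finset.sum_range_succ' (fun i => x ^ i)]
    simp only [pow_zero]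
    congr 1
    calc ∑ i ∈ Finset.range N, xi ^ (i + 1)
        = ∑ i ∈ Finset.range N, x ^ (N - i) := by
          refine Finset.sum_congr rfl fun i hi => ?_
          exact hinv _ _ (by have := Finset.mem_range.mp hi; omega)
      _ = ∑ i ∈ Finset.range N, x ^ (i + 1) := by
          rw [← Finset.sum_range_reflect (fun i => x ^ (i + 1)) N]
          refine Finset.sum_congr rfl fun i hi => ?_
          have := Finset.mem_range.mp hi
          congr 1; omega

lemma aux_list_finset_prod {k : Type*} [CommMonoid k] (f : ℕ → k) (n : ℕ) :
    ((List.range n).map f).prod = ∏ i ∈ Finset.range n, f i := by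
  induction n with
  | zero => simp
  | succ n ih => rw [List.range_succ, List.map_append, List.prod_append,
      Finset.prod_range_succ, ih]; simp

lemma aux_prodl {k A ι : Type*} [CommRing k] [Ring A] [Algebra k A] {x E : A}
    (hxE : x * E = E) (c : ι → k) (l : List ι) :
    ((l.map (fun i => (1 : A) - algebraMap k A (c i) * x)).prod) * E
      = algebraMap k A ((l.map (fun i => (1 : k) - c i)).prod) * E := by
  induction l with
  | nil => simp
  | cons a t ih =>
    rw [List.map_cons, List.prod_cons, List.map_cons, List.prod_cons, mul_assoc, ih, map_mul]
    calc (1 - algebraMap k A (c a) * x) * (algebraMap k A ((t.map fun i => (1:k) - c i).prod) * E)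
        = algebraMap k A ((t.map fun i => (1:k) - c i).prod) *
            ((1 - algebraMap k A (c a) * x) * E) := by
          rw [← mul_assoc, ← Algebra.commutes, mul_assoc]
      _ = algebraMap k A ((t.map fun i => (1:k) - c i).prod) *
            (algebraMap k A (1 - c a) * E) := by
          rw [sub_mul, one_mul, mul_assoc, hxE, map_sub, map_one, sub_mul, one_mul]
      _ = algebraMap k A ((1:k) - c a) *
            (algebraMap k A ((t.map fun i => (1:k) - c i).prod) * E) := by
          rw [← mul_assoc, ← map_mul, mul_comm, map_mul, mul_assoc]
      _ = _ := by rw [← mul_assoc, ← map_mul]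

lemma aux_prodr {k A ι : Type*} [CommRing k] [Ring A] [Algebra k A] {x E : A}
    (hEx : E * x = E) (c : ι → k) (l : List ι) :
    E * ((l.map (fun i => (1 : A) - algebraMap k A (c i) * x)).prod)
      = algebraMap k A ((l.map (fun i => (1 : k) - c i)).prod) * E := by
  induction l with
  | nil => simp
  | cons a t ih =>
    rw [List.map_cons, List.prod_cons, List.map_cons, List.prod_cons, ← mul_assoc]
    have hEa : E * (1 - algebraMap k A (c a) * x) = algebraMap k A ((1:k) - c a) * E := by
      rw [mul_sub, mul_one, ← mul_assoc, ← Algebra.commutes, mul_assoc, hEx,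
        map_sub, map_one, sub_mul, one_mul]
    rw [hEa, mul_assoc, ih, ← mul_assoc, ← map_mul]

/-- in the finite dimensional algebra D' = D(m,d,ξ)/(y), with generators
X (and inverse Xi), G, U 0, …, U (m-1) subject to the listed relations, the element
Λ = ∑_{i<md} ∑_{j<m} X^i G^j + ∑_{i<md} ∑_{j<m} X^i G^j U 0 is a left integral:
h Λ = ε(h) Λ for all generators h, and ε(Λ) = 2m²d ≠ 0. -/
theorem stmt_12 {k : Type*} [Field k] [IsAlgClosed k] [CharZero k]
    {A : Type*} [Ring A] [Algebra k A]
    (m d : ℕ) (hm : 0 < m) (hd : 0 < d) (heven : Even ((1 + m) * d))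
    (ξ : k) (hξ : IsPrimitiveRoot ξ (2 * m)) (γ : k) (hγ : γ = ξ ^ 2)
    (X Xi G : A) (U : ℕ → A) (hUper : ∀ s, U (s + m) = U s)
    -- relations of D' = D(m,d,ξ)/(y):
    (hXXi : X * Xi = 1) (hXiX : Xi * X = 1)
    (hXord : X ^ (m * d) = 1) (hGord : G ^ m = 1)
    (huu0 : ∀ s, 1 ≤ s → s ≤ m - 1 → U s * U 0 = 0)
    (hu : ∀ i, U i = algebraMap k A (γ ^ i) * X ^ d * U i)
    (hXu : ∀ i, X * U i = U i * Xi)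
    (huG : ∀ i, U i * G = algebraMap k A (γ ^ i) * Xi ^ (2 * d) * G * U i)
    (hu0sq : U 0 * U 0 =
      algebraMap k A ((1 : k) / m) * Xi ^ ((1 + m) * d / 2) *
        ((List.range (m - 1)).map
          (fun i => 1 - algebraMap k A (γ ^ (-(i : ℤ) - 1)) * X ^ d)).prod * G)
    -- the counit ε on generators:
    (ε : A →ₐ[k] k) (hεX : ε X = 1) (hεG : ε G = 1) (hεU0 : ε (U 0) = 1)
    (hεU : ∀ s, 1 ≤ s → s ≤ m - 1 → ε (U s) = 0) :
    -- conclusion: Λ is a nonzero left integral with ε(Λ) = 2m²d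
    let Λ : A :=
      (∑ i ∈ Finset.range (m * d), ∑ j ∈ Finset.range m, X ^ i * G ^ j) +
      (∑ i ∈ Finset.range (m * d), ∑ j ∈ Finset.range m, X ^ i * G ^ j * U 0)
    (X * Λ = ε X • Λ) ∧ (G * Λ = ε G • Λ) ∧
    (∀ s, s ≤ m - 1 → U s * Λ = ε (U s) • Λ) ∧
    ε Λ = 2 * m ^ 2 * d ∧ ε Λ ≠ 0 := by
  intro Λ
  have hΛ0 : Λ = (∑ i ∈ Finset.range (m * d), ∑ j ∈ Finset.range m, X ^ i * G ^ j) +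
      (∑ i ∈ Finset.range (m * d), ∑ j ∈ Finset.range m, X ^ i * G ^ j * U 0) := rfl
  -- abbreviations
  obtain ⟨E, hEdef⟩ : ∃ E : A, E = ∑ i ∈ Finset.range (m * d), X ^ i := ⟨_, rfl⟩
  obtain ⟨T, hTdef⟩ : ∃ T : A, T = ∑ j ∈ Finset.range m, G ^ j := ⟨_, rfl⟩
  have hLeq : ((List.range (m - 1)).flatMap (α := ℕ) (fun a => ([(a : ℤ)] : List ℤ)))
      = (List.range (m - 1)).map (fun a : ℕ => (a : ℤ)) :=
    List.flatMap_pure_eq_map _ _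
  obtain ⟨P, hPdef⟩ : ∃ P : A, P = (((List.range (m - 1)).map (fun a : ℕ => (a : ℤ))).map
      (fun i : ℤ => 1 - algebraMap k A (γ ^ (-i - 1)) * X ^ d)).prod := ⟨_, rfl⟩
  have hΛ : Λ = E * T + E * T * U 0 := by
    rw [hΛ0, hEdef, hTdef, Finset.sum_mul_sum]
    congr 1
    rw [Finset.sum_mul]
    refine Finset.sum_congr rfl fun i _ => ?_
    rw [Finset.sum_mul]
  -- scalar facts
  have hm0 : (m : k) ≠ 0 := Nat.cast_ne_zero.mpr hm.ne'
  have h1m : (1 : k) / m * m = 1 := by field_simp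
  have hγm : IsPrimitiveRoot γ m := by
    rw [hγ]; exact IsPrimitiveRoot.pow (by omega) hξ rfl
  have hcancel : ∀ {c : k}, c ≠ 0 → ∀ {x y : A},
      algebraMap k A c * x = algebraMap k A c * y → x = y := by
    intro c hc x y h
    have h2 := congrArg (fun z => algebraMap k A c⁻¹ * z) h
    simpa [← mul_assoc, ← map_mul, inv_mul_cancel₀ hc] using h2
  have hcP : ((((List.range (m - 1)).map (fun a : ℕ => (a : ℤ))).map
      (fun i : ℤ => (1 : k) - γ ^ (-i - 1))).prod) = (m : k) := by
    rw [List.map_map, aux_list_finset_prod]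
    have h1 : ∀ i : ℕ, ((fun i : ℤ => (1 : k) - γ ^ (-i - 1)) ∘ (fun a : ℕ => (a : ℤ))) i
        = 1 - (γ⁻¹) ^ (i + 1) := by
      intro i
      show (1 : k) - γ ^ (-(i : ℤ) - 1) = 1 - (γ⁻¹) ^ (i + 1)
      have h2 : (-(i : ℤ) - 1) = -((i + 1 : ℕ) : ℤ) := by push_cast; ring
      rw [h2, zpow_neg, zpow_natCast, inv_pow]
    simp_rw [h1]
    have h2 : IsPrimitiveRoot γ⁻¹ ((m - 1) + 1) := by
      rw [Nat.sub_add_cancel hm]; exact hγm.inv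
    rw [h2.prod_one_sub_pow_eq_order, Nat.cast_sub (by omega : 1 ≤ m), Nat.cast_one]
    ring
  -- basic X, Xi, G facts
  have hcXXi : Commute X Xi := by unfold Commute SemiconjBy; rw [hXXi, hXiX]
  have hXaXia : ∀ a : ℕ, X ^ a * Xi ^ a = 1 := fun a => by
    rw [← hcXXi.mul_pow, hXXi, one_pow]
  have hXiaXa : ∀ a : ℕ, Xi ^ a * X ^ a = 1 := fun a => by
    rw [← hcXXi.symm.mul_pow, hXiX, one_pow]
  have hXE : X * E = E := by rw [hEdef]; exact aux_mull hXord
  have hEX : E * X = E := by rw [hEdef]; exact aux_mulr hXord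
  have hXiE : Xi * E = E := by
    calc Xi * E = Xi * (X * E) := by rw [hXE]
      _ = (Xi * X) * E := (mul_assoc _ _ _).symm
      _ = E := by rw [hXiX, one_mul]
  have hEXi : E * Xi = E := by
    calc E * Xi = (E * X) * Xi := by rw [hEX]
      _ = E * (X * Xi) := mul_assoc _ _ _
      _ = E := by rw [hXXi, mul_one]
  have hXaE : ∀ a : ℕ, X ^ a * E = E := by
    intro a; induction a with
    | zero => rw [pow_zero, one_mul]
    | succ a ih => rw [pow_succ, mul_assoc, hXE, ih]
  have hEXa : ∀ a : ℕ, E * X ^ a = E := by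
    intro a; induction a with
    | zero => rw [pow_zero, mul_one]
    | succ a ih => rw [pow_succ, ← mul_assoc, ih, hEX]
  have hXiaE : ∀ a : ℕ, Xi ^ a * E = E := by
    intro a; induction a with
    | zero => rw [pow_zero, one_mul]
    | succ a ih => rw [pow_succ, mul_assoc, hXiE, ih]
  have hEXia : ∀ a : ℕ, E * Xi ^ a = E := by
    intro a; induction a with
    | zero => rw [pow_zero, mul_one]
    | succ a ih => rw [pow_succ, ← mul_assoc, ih, hEXi]
  have hGT : G * T = T := by rw [hTdef]; exact aux_mull hGord
  have hTG : T * G = T := by rw [hTdef]; exact aux_mulr hGord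
  have hGGi : G * G ^ (m - 1) = 1 := by
    rw [← pow_succ', Nat.sub_add_cancel hm, hGord]
  have hE' : (∑ i ∈ Finset.range (m * d), Xi ^ i) = E := by
    rw [hEdef]; exact aux_inv_sum hXXi hXiX hXord
  -- U commutation facts
  have hUX : ∀ s, U s * X = Xi * U s := by
    intro s
    calc U s * X = (Xi * X) * (U s * X) := by rw [hXiX, one_mul]
      _ = Xi * ((X * U s) * X) := by rw [mul_assoc, ← mul_assoc X]
      _ = Xi * ((U s * Xi) * X) := by rw [hXu s]
      _ = Xi * (U s * (Xi * X)) := by rw [mul_assoc]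
      _ = Xi * U s := by rw [hXiX, mul_one]
  have hUXa : ∀ s (a : ℕ), U s * X ^ a = Xi ^ a * U s := by
    intro s a; induction a with
    | zero => simp
    | succ a ih =>
      rw [pow_succ, ← mul_assoc, ih, mul_assoc, hUX, pow_succ, mul_assoc]
  have hXaU : ∀ s (a : ℕ), X ^ a * U s = U s * Xi ^ a := by
    intro s a; induction a with
    | zero => simp
    | succ a ih =>
      rw [pow_succ', mul_assoc, ih, ← mul_assoc, hXu s, mul_assoc, ← pow_succ']
  have hU0G : U 0 * G = Xi ^ (2 * d) * (G * U 0) := by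
    have h := huG 0
    rw [pow_zero, map_one, one_mul, mul_assoc] at h
    exact h
  have hGU0 : G * U 0 = X ^ (2 * d) * (U 0 * G) := by
    rw [hU0G, ← mul_assoc, hXaXia, one_mul]
  -- the square relation in convenient form
  have hu0sq' : U 0 * U 0 = algebraMap k A ((1 : k) / m) *
      (Xi ^ ((1 + m) * d / 2) * (P * G)) := by
    have h := hu0sq
    simp only [List.pure_def, List.bind_eq_flatMap] at h
    rw [hLeq, ← hPdef] at h
    rw [h, mul_assoc, mul_assoc]
  -- products against E
  have hPE : P * E = algebraMap k A (m : k) * E := by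
    have h := aux_prodl (x := X ^ d) (E := E) (hXaE d)
      (fun i : ℤ => γ ^ (-i - 1)) ((List.range (m - 1)).map (fun a : ℕ => (a : ℤ)))
    rw [hcP] at h
    rw [hPdef]
    exact h
  have hEP : E * P = algebraMap k A (m : k) * E := by
    have h := aux_prodr (x := X ^ d) (E := E) (hEXa d)
      (fun i : ℤ => γ ^ (-i - 1)) ((List.range (m - 1)).map (fun a : ℕ => (a : ℤ)))
    rw [hcP] at h
    rw [hPdef]
    exact h
  have hEU0 : U 0 * E = E * U 0 := by
    calc U 0 * E = ∑ i ∈ Finset.range (m * d), U 0 * X ^ i := by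
          rw [hEdef, Finset.mul_sum]
      _ = ∑ i ∈ Finset.range (m * d), Xi ^ i * U 0 :=
          Finset.sum_congr rfl fun i _ => hUXa 0 i
      _ = (∑ i ∈ Finset.range (m * d), Xi ^ i) * U 0 := by rw [Finset.sum_mul]
      _ = E * U 0 := by rw [hE']
  -- G commutes with U0², hence with Xi^e * P
  have hGU0sq : G * (U 0 * U 0) = (U 0 * U 0) * G := by
    rw [← mul_assoc, hGU0, mul_assoc, mul_assoc, hGU0, ← mul_assoc (U 0) (X ^ (2*d)),
      hUXa 0 (2*d), mul_assoc (Xi ^ (2*d)), ← mul_assoc (X ^ (2*d)), hXaXia, one_mul,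
      ← mul_assoc]
  have hGQ : G * (Xi ^ ((1 + m) * d / 2) * P) = (Xi ^ ((1 + m) * d / 2) * P) * G := by
    have h := hGU0sq
    rw [hu0sq'] at h
    rw [← mul_assoc, ← Algebra.commutes, mul_assoc, mul_assoc] at h
    have h2 := hcancel (by rw [one_div]; exact inv_ne_zero hm0) h
    -- h2 : G * (Xi^e * (P * G)) = Xi^e * (P * G) * G
    have h3 := congrArg (fun z => z * G ^ (m - 1)) h2
    simp only [mul_assoc] at h3
    rw [hGGi, mul_one, mul_one] at h3
    rw [mul_assoc]
    exact h3
  have hQE : (Xi ^ ((1 + m) * d / 2) * P) * E = algebraMap k A (m : k) * E := by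
    rw [mul_assoc, hPE, ← mul_assoc, ← Algebra.commutes, mul_assoc, hXiaE]
  have hEQ : E * (Xi ^ ((1 + m) * d / 2) * P) = algebraMap k A (m : k) * E := by
    rw [← mul_assoc, hEXia, hEP]
  -- E commutes with G
  have hEU0sq : E * (U 0 * U 0) = (U 0 * U 0) * E := by
    rw [← mul_assoc, ← hEU0, mul_assoc, ← hEU0, ← mul_assoc]
  have hEU0sqG : E * (U 0 * U 0) = E * G := by
    rw [hu0sq', ← mul_assoc, ← Algebra.commutes, mul_assoc,
      ← mul_assoc E (Xi ^ ((1 + m) * d / 2)), hEXia, ← mul_assoc E P, hEP,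
      mul_assoc (algebraMap k A ((m : k))), ← mul_assoc, ← map_mul, h1m, map_one, one_mul]
  have hEG : E * G = G * E := by
    have h2 : (U 0 * U 0) * E = G * E := by
      rw [hu0sq', mul_assoc, ← mul_assoc (Xi ^ ((1 + m) * d / 2)) P G,
        ← hGQ, mul_assoc G, hQE, ← mul_assoc G, ← Algebra.commutes, mul_assoc,
        ← mul_assoc, ← map_mul, h1m, map_one, one_mul]
    exact hEU0sqG.symm.trans (hEU0sq.trans h2)
  have cEG : Commute E G := hEG
  have hET : E * T = T * E := by
    rw [hTdef, Finset.mul_sum, Finset.sum_mul]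
    exact Finset.sum_congr rfl fun j _ => (cEG.pow_right j).eq
  have hTU0sq : T * (U 0 * U 0) = (U 0 * U 0) * T := by
    have c2 : Commute (U 0 * U 0) G := hGU0sq.symm
    rw [hTdef, Finset.mul_sum, Finset.sum_mul]
    exact Finset.sum_congr rfl fun j _ => ((c2.pow_right j).symm).eq
  have hGEU0 : Commute G (E * U 0) := by
    show G * (E * U 0) = (E * U 0) * G
    calc G * (E * U 0) = (G * E) * U 0 := (mul_assoc _ _ _).symm
      _ = E * (G * U 0) := by rw [← hEG, mul_assoc]
      _ = (E * X ^ (2*d)) * (U 0 * G) := by rw [hGU0, ← mul_assoc]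
      _ = (E * U 0) * G := by rw [hEXa, ← mul_assoc]
  have hEU0T : (E * U 0) * T = T * (E * U 0) := by
    rw [hTdef, Finset.sum_mul, Finset.mul_sum]
    exact Finset.sum_congr rfl fun j _ => ((hGEU0.pow_left j).symm).eq
  -- main multiplication identities
  have hXΛ1 : X * (E * T) = E * T := by rw [← mul_assoc, hXE]
  have hXΛ2 : X * (E * T * U 0) = E * T * U 0 := by
    rw [← mul_assoc, ← mul_assoc, hXE]
  have hGΛ1 : G * (E * T) = E * T := by rw [← mul_assoc, ← hEG, mul_assoc, hGT]
  have hGΛ2 : G * (E * T * U 0) = E * T * U 0 := by rw [← mul_assoc, hGΛ1]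
  have hU0Λ1 : U 0 * (E * T) = E * T * U 0 := by
    calc U 0 * (E * T) = (U 0 * E) * T := (mul_assoc _ _ _).symm
      _ = (E * U 0) * T := by rw [hEU0]
      _ = T * (E * U 0) := hEU0T
      _ = (T * E) * U 0 := (mul_assoc _ _ _).symm
      _ = E * T * U 0 := by rw [← hET]
  have hU0Λ2 : U 0 * (E * T * U 0) = E * T := by
    calc U 0 * (E * T * U 0) = (U 0 * (E * T)) * U 0 := (mul_assoc _ _ _).symm
      _ = (E * T) * (U 0 * U 0) := by rw [hU0Λ1, mul_assoc]
      _ = E * (T * (U 0 * U 0)) := mul_assoc _ _ _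
      _ = (E * (U 0 * U 0)) * T := by rw [hTU0sq, ← mul_assoc]
      _ = (E * G) * T := by rw [hEU0sqG]
      _ = E * T := by rw [mul_assoc, hGT]
  -- the Xi-absorption fact for the whole Λ
  have habs : ∀ a : ℕ, Xi ^ a * (E * T + E * T * U 0) = E * T + E * T * U 0 := by
    intro a
    rw [mul_add, ← mul_assoc, hXiaE, ← mul_assoc, ← mul_assoc, hXiaE]
  -- vanishing of U s on Λ for 1 ≤ s ≤ m-1
  have hUs0 : ∀ s, 1 ≤ s → s ≤ m - 1 → U s * (E * T + E * T * U 0) = 0 := by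
    intro s hs1 hs2
    have hw : U s * (E * T + E * T * U 0)
        = algebraMap k A (γ ^ s) * (U s * (E * T + E * T * U 0)) := by
      conv_lhs => rw [hu s]
      rw [mul_assoc, mul_assoc, ← mul_assoc (X ^ d), hXaU s d, mul_assoc, habs d]
    have hγs : γ ^ s - 1 ≠ 0 := by
      refine sub_ne_zero.mpr (hγm.pow_ne_one_of_pos_of_lt (by omega) (by omega))
    refine hcancel hγs ?_
    rw [mul_zero, map_sub, map_one, sub_mul, one_mul, ← hw, sub_self]
  -- the value of ε on Λ
  have hεΛ : ε Λ = 2 * m ^ 2 * d := by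
    rw [hΛ0]
    simp only [map_add, map_sum, map_mul, map_pow, hεX, hεG, hεU0, one_pow, mul_one,
      Finset.sum_const, Finset.card_range, nsmul_eq_mul]
    push_cast
    ring
  refine ⟨?_, ?_, ?_, hεΛ, ?_⟩
  · rw [hεX, one_smul, hΛ, mul_add, hXΛ1, hXΛ2]
  · rw [hεG, one_smul, hΛ, mul_add, hGΛ1, hGΛ2]
  · intro s hs
    rcases Nat.eq_zero_or_pos s with hs0 | hs1
    · subst hs0
      rw [hεU0, one_smul, hΛ, mul_add, hU0Λ1, hU0Λ2, add_comm]
    · rw [hεU s hs1 hs, zero_smul, hΛ]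
      exact hUs0 s hs1 hs
  · rw [hεΛ]
    have h2 : (2 : k) ≠ 0 := two_ne_zero
    have hd0 : (d : k) ≠ 0 := Nat.cast_ne_zero.mpr hd.ne'
    exact mul_ne_zero (mul_ne_zero h2 (pow_ne_zero 2 hm0)) hd0
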